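/- (Cartan-type decomposition of SU(1,1).) For every 2×2 complex matrix X with det X = 1 and XᴴηX = η (i.e. X ∈ SU(1,1)), there exist real numbers α, γ ∈ (−2π, 2π] and β ∈ [0, ∞) such that X = exp(α·K_z)·exp(β·K_y)·exp(γ·K_z), where exp denotes the matrix exponential. -/

import Mathlib

open Matrix

/-- The metric matrix η = diag(1, -1). -/
def eta : Matrix (Fin 2) (Fin 2) ℂ := !![1, 0; 0, -1]

/-- The generator K_y = (1/2)[[0,−1],[−1,0]] of su(1,1). -/
noncomputable def Ky : Matrix (Fin 2) (Fin 2) ℂ := (1 / 2 : ℂ) • !![0, -1; -1, 0]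

/-- The generator K_z = (1/2)[[−i,0],[0,i]] of su(1,1). -/
noncomputable def Kz : Matrix (Fin 2) (Fin 2) ℂ :=
  (1 / 2 : ℂ) • !![-Complex.I, 0; 0, Complex.I]

lemma expDiag2 (x y : ℂ) : NormedSpace.exp (!![x, 0; 0, y]) =
    !![Complex.exp x, 0; 0, Complex.exp y] := by
  have hdiag : !![x, 0; 0, y] = Matrix.diagonal ![x, y] := by
    ext i j
    fin_cases i <;> fin_cases j <;> simp [Matrix.diagonal_apply]
  rw [hdiag]
  rw [show NormedSpace.exp (Matrix.diagonal ![x, y])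
      = Matrix.diagonal (NormedSpace.exp ![x, y]) from Matrix.exp_diagonal _]
  ext i j
  fin_cases i <;> fin_cases j <;>
    simp [Matrix.diagonal_apply, Pi.exp_def, ← Complex.exp_eq_exp_ℂ]

lemma expKz (t : ℝ) : NormedSpace.exp (t • Kz) =
    !![Complex.exp (-(t/2) * Complex.I), 0; 0, Complex.exp ((t/2) * Complex.I)] := by
  have h : t • Kz = !![-(t/2) * Complex.I, 0; 0, (t/2) * Complex.I] := by
    ext i j
    fin_cases i <;> fin_cases j <;> simp [Kz] <;> ring
  rw [h, expDiag2]

lemma expKy (t : ℝ) : NormedSpace.exp (t • Ky) =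
    !![(Real.cosh (t/2) : ℂ), -(Real.sinh (t/2) : ℂ);
       -(Real.sinh (t/2) : ℂ), (Real.cosh (t/2) : ℂ)] := by
  set P : Matrix (Fin 2) (Fin 2) ℂ := !![1, 1; 1, -1] with hP
  have hdet : P.det = -2 := by simp [hP, Matrix.det_fin_two_of]; ring
  have hPu : IsUnit P := by
    rw [Matrix.isUnit_iff_isUnit_det, hdet]
    exact isUnit_iff_ne_zero.2 (by norm_num)
  have hPinv : P⁻¹ = (1/2 : ℂ) • !![1, 1; 1, -1] := by
    rw [Matrix.inv_def, hdet]
    ext i j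
    fin_cases i <;> fin_cases j <;>
      simp [hP, Matrix.adjugate_fin_two, Ring.inverse_eq_inv'] <;> ring
  have h : t • Ky = P * !![(-(t/2) : ℂ), 0; 0, ((t/2) : ℂ)] * P⁻¹ := by
    rw [hPinv]
    ext i j
    fin_cases i <;> fin_cases j <;>
      simp [hP, Ky, Matrix.mul_apply, Fin.sum_univ_two] <;> ring
  rw [h]
  rw [show NormedSpace.exp (P * !![(-(t/2) : ℂ), 0; 0, ((t/2) : ℂ)] * P⁻¹)
      = P * NormedSpace.exp (!![(-(t/2) : ℂ), 0; 0, ((t/2) : ℂ)]) * P⁻¹ from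
        Matrix.exp_conj _ _ hPu]
  rw [expDiag2, hPinv]
  have hc : (Real.cosh (t/2) : ℂ) = (Complex.exp (-(t/2)) + Complex.exp (t/2)) / 2 := by
    rw [Complex.ofReal_cosh, Complex.cosh]
    push_cast
    ring_nf
  have hs : (Real.sinh (t/2) : ℂ) = (Complex.exp (t/2) - Complex.exp (-(t/2))) / 2 := by
    rw [Complex.ofReal_sinh, Complex.sinh]
    push_cast
    ring_nf
  ext i j
  fin_cases i <;> fin_cases j <;>
    simp [hP, Matrix.mul_apply, Fin.sum_univ_two, hc, hs] <;> ring

lemma cartan (a b : ℂ) (h : ‖a‖ ^ 2 = 1 + ‖b‖ ^ 2) :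
    ∃ α γ β : ℝ,
      α ∈ Set.Ioc (-(2 * Real.pi)) (2 * Real.pi) ∧
      γ ∈ Set.Ioc (-(2 * Real.pi)) (2 * Real.pi) ∧
      0 ≤ β ∧
      !![a, b; starRingEnd ℂ b, starRingEnd ℂ a] =
        NormedSpace.exp (α • Kz) * NormedSpace.exp (β • Ky) *
          NormedSpace.exp (γ • Kz) := by
  have pi_pos := Real.pi_pos
  set θ := Complex.arg a with hθ
  set φ := Complex.arg (-b) with hφ
  have hθ1 : -Real.pi < θ := Complex.neg_pi_lt_arg a
  have hθ2 : θ ≤ Real.pi := Complex.arg_le_pi a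
  have hφ1 : -Real.pi < φ := Complex.neg_pi_lt_arg (-b)
  have hφ2 : φ ≤ Real.pi := Complex.arg_le_pi (-b)
  set β : ℝ := 2 * Real.arsinh (‖b‖) with hβ
  set α : ℝ := if θ + φ = 2 * Real.pi then 2 * Real.pi else -(θ + φ) with hα
  set γ : ℝ := φ - θ with hγ
  have hβ2 : β / 2 = Real.arsinh (‖b‖) := by rw [hβ]; ring
  have hcosh : Real.cosh (β / 2) = ‖a‖ := by
    rw [hβ2, Real.cosh_arsinh, ← h, Real.sqrt_sq (norm_nonneg a)]
  have hsinh : Real.sinh (β / 2) = ‖b‖ := by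
    rw [hβ2, Real.sinh_arsinh]
  have ha : (‖a‖ : ℂ) * Complex.exp (θ * Complex.I) = a :=
    Complex.norm_mul_exp_arg_mul_I a
  have hb : (‖b‖ : ℂ) * Complex.exp (φ * Complex.I) = -b := by
    rw [hφ, ← norm_neg b]
    exact Complex.norm_mul_exp_arg_mul_I (-b)
  -- the shift
  have hk : ∃ k : ℤ, (α : ℝ) = -(θ + φ) + 4 * Real.pi * k := by
    by_cases hc : θ + φ = 2 * Real.pi
    · refine ⟨1, ?_⟩
      rw [hα, if_pos hc, hc]
      push_cast
      ring
    · exact ⟨0, by rw [hα, if_neg hc]; push_cast; ring⟩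
  obtain ⟨k, hk⟩ := hk
  have hXa : Complex.exp (-(α/2 : ℝ) * Complex.I)
      = Complex.exp (((θ + φ)/2 : ℝ) * Complex.I) := by
    have harg : (-(α/2 : ℝ) : ℂ) * Complex.I
        = (((θ + φ)/2 : ℝ) : ℂ) * Complex.I + (-k : ℤ) * (2 * Real.pi * Complex.I) := by
      push_cast [hk]
      ring
    rw [harg, Complex.exp_add, Complex.exp_int_mul_two_pi_mul_I, mul_one]
  have hXa' : Complex.exp ((α/2 : ℝ) * Complex.I)
      = Complex.exp ((-(θ + φ)/2 : ℝ) * Complex.I) := by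
    have harg : ((α/2 : ℝ) : ℂ) * Complex.I
        = ((-(θ + φ)/2 : ℝ) : ℂ) * Complex.I + (k : ℤ) * (2 * Real.pi * Complex.I) := by
      push_cast [hk]
      ring
    rw [harg, Complex.exp_add, Complex.exp_int_mul_two_pi_mul_I, mul_one]
  -- the four product identities
  have E1 : Complex.exp (-(α/2 : ℝ) * Complex.I) * Complex.exp (-(γ/2 : ℝ) * Complex.I)
      = Complex.exp (θ * Complex.I) := by
    rw [hXa, ← Complex.exp_add]
    congr 1
    rw [hγ]
    push_cast
    ring
  have E2 : Complex.exp (-(α/2 : ℝ) * Complex.I) * Complex.exp ((γ/2 : ℝ) * Complex.I)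
      = Complex.exp (φ * Complex.I) := by
    rw [hXa, ← Complex.exp_add]
    congr 1
    rw [hγ]
    push_cast
    ring
  have E3 : Complex.exp ((α/2 : ℝ) * Complex.I) * Complex.exp (-(γ/2 : ℝ) * Complex.I)
      = Complex.exp (-(φ * Complex.I)) := by
    rw [hXa', ← Complex.exp_add]
    congr 1
    rw [hγ]
    push_cast
    ring
  have E4 : Complex.exp ((α/2 : ℝ) * Complex.I) * Complex.exp ((γ/2 : ℝ) * Complex.I)
      = Complex.exp (-(θ * Complex.I)) := by
    rw [hXa', ← Complex.exp_add]
    congr 1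
    rw [hγ]
    push_cast
    ring
  refine ⟨α, γ, β, ?_, ?_, ?_, ?_⟩
  · rw [hα]
    by_cases hc : θ + φ = 2 * Real.pi
    · rw [if_pos hc]
      constructor <;> nlinarith
    · rw [if_neg hc]
      have : θ + φ < 2 * Real.pi := lt_of_le_of_ne (by linarith) hc
      constructor <;> [linarith; linarith]
  · rw [hγ]
    constructor <;> [linarith; linarith]
  · rw [hβ]
    have := Real.arsinh_nonneg_iff.mpr (norm_nonneg b)
    linarith
  · rw [expKz α, expKy β, expKz γ, hcosh, hsinh]
    have hbc : (‖b‖ : ℂ) * Complex.exp (-(φ * Complex.I))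
        = -(starRingEnd ℂ b) := by
      have h1 := congrArg (starRingEnd ℂ) hb
      rw [_root_.map_mul, map_neg, Complex.conj_ofReal, ← Complex.exp_conj] at h1
      rw [show ((-((φ:ℝ) * Complex.I)) : ℂ) = starRingEnd ℂ ((φ:ℝ) * Complex.I) from by
        simp [Complex.conj_ofReal]]
      exact h1
    have hac : (‖a‖ : ℂ) * Complex.exp (-(θ * Complex.I))
        = starRingEnd ℂ a := by
      have h1 := congrArg (starRingEnd ℂ) ha
      rw [_root_.map_mul, Complex.conj_ofReal, ← Complex.exp_conj] at h1
      rw [show ((-((θ:ℝ) * Complex.I)) : ℂ) = starRingEnd ℂ ((θ:ℝ) * Complex.I) from by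
        simp [Complex.conj_ofReal]]
      exact h1
    simp only [neg_mul] at E1 E2 E3 E4 hbc hac
    ext i j
    fin_cases i <;> fin_cases j <;>
      simp [Matrix.mul_apply, Fin.sum_univ_two]
    · linear_combination (norm := (push_cast; ring1)) (-(‖a‖ : ℂ)) * E1 - ha
    · linear_combination (norm := (push_cast; ring1)) (‖b‖ : ℂ) * E2 + hb
    · linear_combination (norm := (push_cast; ring1)) (‖b‖ : ℂ) * E3 + hbc
    · linear_combination (norm := (push_cast; ring1)) (-(‖a‖ : ℂ)) * E4 - hac

theorem stmt19 (X : Matrix (Fin 2) (Fin 2) ℂ)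
    (hdet : X.det = 1) (hη : Xᴴ * eta * X = eta) :
    ∃ α γ β : ℝ,
      α ∈ Set.Ioc (-(2 * Real.pi)) (2 * Real.pi) ∧
      γ ∈ Set.Ioc (-(2 * Real.pi)) (2 * Real.pi) ∧
      0 ≤ β ∧
      X = NormedSpace.exp (α • Kz) * NormedSpace.exp (β • Ky) *
            NormedSpace.exp (γ • Kz) := by
  have e00 := congrFun (congrFun hη 0) 0
  have e01 := congrFun (congrFun hη 0) 1
  have e10 := congrFun (congrFun hη 1) 0
  have e11 := congrFun (congrFun hη 1) 1
  simp [eta, Matrix.mul_apply, Fin.sum_univ_two, Matrix.conjTranspose_apply] at e00 e01 e10 e11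
  rw [Matrix.det_fin_two] at hdet
  have hd : X 1 1 = starRingEnd ℂ (X 0 0) := by
    linear_combination (-(X 1 1)) * e00 + (starRingEnd ℂ (X 0 0)) * hdet + (X 1 0) * e01
  have hc : X 1 0 = starRingEnd ℂ (X 0 1) := by
    linear_combination (starRingEnd ℂ (X 0 1)) * hdet + (X 1 0) * e11 - (X 1 1) * e10
  have hnorm : ‖(X 0 0)‖ ^ 2 = 1 + ‖(X 0 1)‖ ^ 2 := by
    have h1 : (starRingEnd ℂ) (X 0 0) * X 0 0 - (starRingEnd ℂ) (X 0 1) * X 0 1 = 1 := by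
      rw [hc, Complex.conj_conj] at e00
      linear_combination e00
    have h2 : ((Complex.normSq (X 0 0) : ℂ)) - (Complex.normSq (X 0 1) : ℂ) = 1 := by
      rw [← Complex.mul_conj, ← Complex.mul_conj]
      linear_combination h1
    have h3 : Complex.normSq (X 0 0) - Complex.normSq (X 0 1) = 1 := by exact_mod_cast h2
    rw [Complex.sq_norm, Complex.sq_norm]
    linarith
  obtain ⟨α, γ, β, m1, m2, m3, m4⟩ := cartan (X 0 0) (X 0 1) hnorm
  refine ⟨α, γ, β, m1, m2, m3, ?_⟩
  rw [← m4]
  ext i j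
  fin_cases i <;> fin_cases j <;> simp [hd, hc]
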